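/- Let u(t,·) be smooth and strictly convex on ℝ with surjective gradient, and let u*(t,y) := sup_x (xy - u(t,x)) be its spatial Legendre transform. If u satisfies ∂ₜu - (β/2)|∂ₓu - x|² + (1/2)(1 - 1/∂ₓₓu) = 0, then u* satisfies ∂ₜu* + (β/2)|∂_y u* - y|² - (1/2)(1 - ∂_{yy}u*) = 0. -/

import Mathlib

open Filter Set Topology Function


/-- If `u` solves `∂ₜu - (β/2)|∂ₓu - x|² + ½(1 - 1/∂ₓₓu) = 0` and is
smooth, strictly convex in `x` with bijective spatial derivative, then its spatial
Legendre transform `u*` solves `∂ₜu* + (β/2)|∂_y u* - y|² - ½(1 - ∂_yy u*) = 0`. -/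
theorem sbb_stmt2 (β : ℝ) (hβ : 0 < β) (u ustar : ℝ → ℝ → ℝ)
    (hu : ContDiff ℝ 2 (Function.uncurry u))
    (hconv : ∀ t, StrictConvexOn ℝ Set.univ (u t))
    (hbij : ∀ t, Function.Bijective (deriv (u t)))
    (hstar : ∀ t y, ustar t y = ⨆ x : ℝ, (x * y - u t x))
    (hPDE : ∀ t x, deriv (fun s => u s x) t - (β / 2) * |deriv (u t) x - x| ^ 2
      + (1 / 2) * (1 - 1 / deriv (deriv (u t)) x) = 0) :
    ∀ t y, deriv (fun s => ustar s y) t + (β / 2) * |deriv (ustar t) y - y| ^ 2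
      - (1 / 2) * (1 - deriv (deriv (ustar t)) y) = 0 := by
  have h12 : (2 : WithTop ℕ∞) ≠ 0 := by norm_num
  have hslice : ∀ t, ContDiff ℝ 2 (u t) := fun t =>
    hu.comp (contDiff_const.prodMk contDiff_id)
  have hsliceT : ∀ x, ContDiff ℝ 2 (fun s => u s x) := fun x =>
    hu.comp (contDiff_id.prodMk contDiff_const)
  have hFc : Continuous (fderiv ℝ (uncurry u)) := hu.continuous_fderiv h12
  have hdx : ∀ t x, HasDerivAt (u t) (fderiv ℝ (uncurry u) (t, x) (0, 1)) x := by
    intro t x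
    have h1 : HasDerivAt (fun x : ℝ => ((t, x) : ℝ × ℝ)) ((0 : ℝ), (1 : ℝ)) x :=
      (hasDerivAt_const x t).prodMk (hasDerivAt_id x)
    exact ((hu.differentiable h12 (t, x)).hasFDerivAt).comp_hasDerivAt x h1
  have hdt : ∀ t x, HasDerivAt (fun s => u s x) (fderiv ℝ (uncurry u) (t, x) (1, 0)) t := by
    intro t x
    have h1 : HasDerivAt (fun s : ℝ => ((s, x) : ℝ × ℝ)) ((1 : ℝ), (0 : ℝ)) t :=
      (hasDerivAt_id t).prodMk (hasDerivAt_const t x)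
    exact ((hu.differentiable h12 (t, x)).hasFDerivAt).comp_hasDerivAt t h1
  have huxc : Continuous (fun p : ℝ × ℝ => deriv (u p.1) p.2) := by
    have : (fun p : ℝ × ℝ => deriv (u p.1) p.2)
        = fun p : ℝ × ℝ => fderiv ℝ (uncurry u) p ((0 : ℝ), (1 : ℝ)) := by
      funext p; exact (hdx p.1 p.2).deriv
    rw [this]
    exact hFc.clm_apply continuous_const
  have hutc : Continuous (fun p : ℝ × ℝ => deriv (fun s => u s p.2) p.1) := by
    have : (fun p : ℝ × ℝ => deriv (fun s => u s p.2) p.1)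
        = fun p : ℝ × ℝ => fderiv ℝ (uncurry u) p ((1 : ℝ), (0 : ℝ)) := by
      funext p; exact (hdt p.1 p.2).deriv
    rw [this]
    exact hFc.clm_apply continuous_const
  have huxxc : ∀ t, Continuous (deriv (deriv (u t))) := by
    intro t
    have h1 : ContDiff ℝ 1 (deriv (u t)) := by
      have := (contDiff_succ_iff_deriv (n := 1)).mp (by exact_mod_cast hslice t)
      exact this.2.2
    exact h1.continuous_deriv le_rfl
  have hdiff : ∀ t x, DifferentiableAt ℝ (u t) x := fun t x => (hdx t x).differentiableAt
  -- strict monotonicity of the space derivative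
  have hsm : ∀ t, StrictMono (deriv (u t)) := by
    intro t
    have := (hconv t).strictMonoOn_deriv (fun x _ => hdiff t x)
    exact fun a b hab => this (mem_univ a) (mem_univ b) hab
  -- the inverse function g
  set g : ℝ → ℝ → ℝ := fun t => invFun (deriv (u t)) with hgdef
  have hg1 : ∀ t y, deriv (u t) (g t y) = y := fun t y =>
    rightInverse_invFun (hbij t).2 y
  -- tangent line bound
  have hle : ∀ t y x, x * y - u t x ≤ g t y * y - u t (g t y) := by
    intro t y x
    rcases lt_trichotomy x (g t y) with h | h | h
    · have hs := (hconv t).slope_lt_deriv (mem_univ x) (mem_univ (g t y)) h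
        (hdiff t (g t y))
      rw [hg1 t y, slope_def_field] at hs
      have hgx : 0 < g t y - x := by linarith
      rw [div_lt_iff₀ hgx] at hs
      nlinarith
    · rw [h]
    · have hs := (hconv t).deriv_lt_slope (mem_univ (g t y)) (mem_univ x) h
        (hdiff t (g t y))
      rw [hg1 t y, slope_def_field] at hs
      have hgx : 0 < x - g t y := by linarith
      rw [lt_div_iff₀ hgx] at hs
      nlinarith
  have hbdd : ∀ t y, BddAbove (range (fun x => x * y - u t x)) := by
    intro t y
    exact ⟨g t y * y - u t (g t y), by rintro _ ⟨x, rfl⟩; exact hle t y x⟩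
  have hstar_eq : ∀ t y, ustar t y = g t y * y - u t (g t y) := by
    intro t y
    rw [hstar t y]
    exact le_antisymm (ciSup_le (hle t y)) (le_ciSup (hbdd t y) (g t y))
  have huxC1 : ∀ t, ContDiff ℝ 1 (deriv (u t)) := by
    intro t
    have := (contDiff_succ_iff_deriv (n := 1)).mp (by exact_mod_cast hslice t)
    exact this.2.2
  have huxx : ∀ t x, deriv (deriv (u t)) x ≠ 0 := by
    intro t x₀ h0
    set D := deriv (deriv (u t)) with hD
    set q : ℝ → ℝ := fun x => 2 * (deriv (fun s => u s x) t) - β * |deriv (u t) x - x| ^ 2 + 1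
      with hq
    have key : ∀ x, 1 / D x = q x := by
      intro x
      have := hPDE t x
      simp only [hq, hD]
      linarith
    have hqc : Continuous q := by
      have c1 : Continuous fun x : ℝ => deriv (fun s => u s x) t :=
        hutc.comp (continuous_const.prodMk continuous_id)
      have c2 : Continuous fun x : ℝ => deriv (u t) x :=
        huxc.comp (continuous_const.prodMk continuous_id)
      exact ((continuous_const.mul c1).sub
        (continuous_const.mul (((c2.sub continuous_id).abs).pow 2))).add continuous_const
    have hsel : ∀ n : ℕ, ∃ x, x ∈ Ioo x₀ (x₀ + 1 / (n + 1)) ∧ D x ≠ 0 := by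
      intro n
      by_contra hc
      push_neg at hc
      have hpos : (0 : ℝ) < 1 / (n + 1) := by positivity
      set a := x₀ + 1 / (n + 1) / 3 with ha
      set b := x₀ + 1 / (n + 1) / 2 with hb
      have hab : a < b := by rw [ha, hb]; linarith
      obtain ⟨c, hc1, hc2⟩ := exists_hasDerivAt_eq_slope (deriv (u t)) D hab
        ((huxC1 t).continuous.continuousOn)
        (fun x _ => ((huxC1 t).differentiable one_ne_zero x).hasDerivAt)
      have hcz : D c = 0 := by
        apply hc
        constructor
        · calc x₀ < a := by rw [ha]; linarith
            _ < c := hc1.1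
        · calc c < b := hc1.2
            _ < x₀ + 1 / (n + 1) := by rw [hb]; linarith
      rw [hcz] at hc2
      have hba : (0:ℝ) < b - a := by linarith
      have : deriv (u t) b - deriv (u t) a = 0 := by
        field_simp at hc2
        linarith [hc2]
      linarith [hsm t hab]
    choose xs hxs hne using hsel
    have hxt : Tendsto xs atTop (𝓝 x₀) := by
      refine tendsto_of_tendsto_of_tendsto_of_le_of_le (g := fun _ : ℕ => x₀)
        (h := fun n : ℕ => x₀ + 1 / (n + 1)) tendsto_const_nhds ?_ ?_ ?_
      · have : Tendsto (fun n : ℕ => 1 / ((n : ℝ) + 1)) atTop (𝓝 0) :=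
          tendsto_one_div_add_atTop_nhds_zero_nat
        simpa using tendsto_const_nhds.add this
      · exact fun n => (hxs n).1.le
      · exact fun n => (hxs n).2.le
    have h1 : Tendsto (fun n => q (xs n) * D (xs n)) atTop (𝓝 (q x₀ * D x₀)) :=
      (((hqc.tendsto x₀).comp hxt).mul (((huxxc t).tendsto x₀).comp hxt))
    have h2 : (fun n => q (xs n) * D (xs n)) = fun _ => 1 := by
      funext n
      rw [← key (xs n), one_div, inv_mul_cancel₀ (hne n)]
    rw [h2, h0, mul_zero] at h1
    exact one_ne_zero (tendsto_nhds_unique tendsto_const_nhds h1)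
  have hgc : ∀ t, Continuous (g t) := by
    intro t
    set e := StrictMono.orderIsoOfSurjective (deriv (u t)) (hsm t) (hbij t).2 with he
    have heq : g t = ⇑e.symm := by
      funext z
      apply (hbij t).1
      rw [hg1 t z]
      have h1 : deriv (u t) (e.symm z) = e (e.symm z) := by rw [he]; rfl
      rw [h1, OrderIso.apply_symm_apply]
    rw [heq]
    exact e.symm.continuous
  -- derivative of g in y
  have hgd : ∀ t y, HasDerivAt (g t) (deriv (deriv (u t)) (g t y))⁻¹ y := by
    intro t y
    have hf : HasDerivAt (deriv (u t)) (deriv (deriv (u t)) (g t y)) (g t y) := by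
      have h1 : ContDiff ℝ 1 (deriv (u t)) := by
        have := (contDiff_succ_iff_deriv (n := 1)).mp (by exact_mod_cast hslice t)
        exact this.2.2
      exact (h1.differentiable one_ne_zero (g t y)).hasDerivAt
    exact HasDerivAt.of_local_left_inverse ((hgc t).continuousAt) hf
      (huxx t (g t y)) (Eventually.of_forall (hg1 t))
  -- first derivative of ustar in y
  have hstar_d1 : ∀ t y, HasDerivAt (ustar t) (g t y) y := by
    intro t y
    have heq : ustar t = fun y => g t y * y - u t (g t y) := funext (hstar_eq t)
    rw [heq]
    have h1 : HasDerivAt (fun y => g t y * y)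
        ((deriv (deriv (u t)) (g t y))⁻¹ * y + g t y * 1) y :=
      (hgd t y).mul (hasDerivAt_id y)
    have h2 : HasDerivAt (fun y => u t (g t y))
        (deriv (u t) (g t y) * (deriv (deriv (u t)) (g t y))⁻¹) y :=
      ((hdiff t (g t y)).hasDerivAt).comp y (hgd t y)
    have := h1.sub h2
    rw [hg1 t y] at this
    exact this.congr_deriv (by ring)
  -- second derivative of ustar in y
  have hstar_d2 : ∀ t y, deriv (deriv (ustar t)) y = (deriv (deriv (u t)) (g t y))⁻¹ := by
    intro t y
    have heq : deriv (ustar t) = g t := funext (fun y => (hstar_d1 t y).deriv)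
    rw [heq]
    exact (hgd t y).deriv
  -- time derivative of ustar
  have hstar_dt : ∀ t y, HasDerivAt (fun s => ustar s y)
      (-(deriv (fun s => u s (g t y)) t)) t := by
    intro t y
    set x₀ := g t y with hx0
    set L := deriv (fun s => u s x₀) t with hL
    -- continuity of s ↦ g s y at t
    have hgst : Tendsto (fun s => g s y) (𝓝 t) (𝓝 x₀) := by
      rw [tendsto_order]
      constructor
      · intro a ha
        have h1 : deriv (u t) a < y := by rw [← hg1 t y]; exact hsm t ha
        have hc : ContinuousAt (fun s => deriv (u s) a) t :=
          (huxc.comp (continuous_id.prodMk continuous_const)).continuousAt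
        have h2 : ∀ᶠ s in 𝓝 t, deriv (u s) a < y := hc.eventually_lt_const h1
        filter_upwards [h2] with s hs
        by_contra hcon
        push_neg at hcon
        have := (hsm s).monotone hcon
        rw [hg1 s y] at this
        linarith
      · intro a ha
        have h1 : y < deriv (u t) a := by rw [← hg1 t y]; exact hsm t ha
        have hc : ContinuousAt (fun s => deriv (u s) a) t :=
          (huxc.comp (continuous_id.prodMk continuous_const)).continuousAt
        have h2 : ∀ᶠ s in 𝓝 t, y < deriv (u s) a := hc.eventually_const_lt h1
        filter_upwards [h2] with s hs
        by_contra hcon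
        push_neg at hcon
        have := (hsm s).monotone hcon
        rw [hg1 s y] at this
        linarith
    -- the two comparison functions
    set A : ℝ → ℝ := fun s => -((u s x₀ - u t x₀) / (s - t)) with hA
    set B : ℝ → ℝ := fun s => -((u s (g s y) - u t (g s y)) / (s - t)) with hB
    have hLd : HasDerivAt (fun s => u s x₀) L t :=
      (((hsliceT x₀).differentiable h12) t).hasDerivAt
    have TA : Tendsto A (𝓝[≠] t) (𝓝 (-L)) := by
      have h2 := (hasDerivAt_iff_tendsto_slope.mp hLd).neg
      refine h2.congr (fun s => ?_)
      rw [slope_def_field, hA]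
    have TB : Tendsto B (𝓝[≠] t) (𝓝 (-L)) := by
      rw [Metric.tendsto_nhds]
      intro ε hε
      have hUT : ContinuousAt (fun p : ℝ × ℝ => deriv (fun s => u s p.2) p.1) (t, x₀) :=
        hutc.continuousAt
      rw [Metric.continuousAt_iff] at hUT
      obtain ⟨δ, hδ, hball⟩ := hUT ε hε
      have hev1 : ∀ᶠ s in 𝓝 t, dist (g s y) x₀ < δ := (Metric.tendsto_nhds.mp hgst) δ hδ
      have hev2 : ∀ᶠ s in 𝓝 t, dist s t < δ := by
        filter_upwards [Metric.ball_mem_nhds t hδ] with s hs using Metric.mem_ball.mp hs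
      filter_upwards [nhdsWithin_le_nhds hev1, nhdsWithin_le_nhds hev2,
        self_mem_nhdsWithin] with s hs1 hs2 hs3
      have hsne : s ≠ t := hs3
      set X := g s y with hX
      have hder : ∀ r : ℝ, HasDerivAt (fun r' => u r' X) (deriv (fun r' => u r' X) r) r :=
        fun r => (((hsliceT X).differentiable h12) r).hasDerivAt
      have hcont : ContinuousOn (fun r' => u r' X) (Icc (min s t) (max s t)) :=
        ((hsliceT X).continuous).continuousOn
      have main : ∀ c : ℝ, dist c t < δ →
          dist (-(deriv (fun r' => u r' X) c)) (-L) < ε := by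
        intro c hc
        rw [dist_neg_neg]
        have : dist ((c, X) : ℝ × ℝ) (t, x₀) < δ := by
          rw [Prod.dist_eq]
          exact max_lt hc hs1
        exact hball this
      rcases lt_or_gt_of_ne hsne with hlt | hgt
      · obtain ⟨c, hc, hceq⟩ := exists_hasDerivAt_eq_slope (fun r' => u r' X)
          (fun r => deriv (fun r' => u r' X) r) hlt
          (((hsliceT X).continuous).continuousOn) (fun r _ => hder r)
        have hBs : B s = -(deriv (fun r' => u r' X) c) := by
          rw [hB, hceq]
          have h1 : s - t ≠ 0 := sub_ne_zero.mpr hsne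
          have h2 : t - s ≠ 0 := sub_ne_zero.mpr hsne.symm
          field_simp
          ring
        rw [hBs]
        apply main
        have hct : |c - t| < |s - t| := by
          rw [abs_of_neg (by linarith [hc.1, hc.2] : s - t < 0), abs_sub_lt_iff]
          exact ⟨by linarith [hc.1, hc.2], by linarith [hc.1, hc.2]⟩
        rw [Real.dist_eq]
        calc |c - t| < |s - t| := hct
          _ = dist s t := (Real.dist_eq s t).symm
          _ < δ := hs2
      · obtain ⟨c, hc, hceq⟩ := exists_hasDerivAt_eq_slope (fun r' => u r' X)
          (fun r => deriv (fun r' => u r' X) r) hgt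
          (((hsliceT X).continuous).continuousOn) (fun r _ => hder r)
        have hBs : B s = -(deriv (fun r' => u r' X) c) := by
          rw [hB, hceq]
        rw [hBs]
        apply main
        have hct : |c - t| < |s - t| := by
          rw [abs_of_pos (by linarith [hc.1, hc.2] : (0:ℝ) < s - t), abs_sub_lt_iff]
          exact ⟨by linarith [hc.1, hc.2], by linarith [hc.1, hc.2]⟩
        rw [Real.dist_eq]
        calc |c - t| < |s - t| := hct
          _ = dist s t := (Real.dist_eq s t).symm
          _ < δ := hs2
    -- squeeze
    rw [hasDerivAt_iff_tendsto_slope]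
    have Tmin : Tendsto (fun s => min (A s) (B s)) (𝓝[≠] t) (𝓝 (-L)) := by
      have := TA.min TB
      rwa [min_self] at this
    have Tmax : Tendsto (fun s => max (A s) (B s)) (𝓝[≠] t) (𝓝 (-L)) := by
      have := TA.max TB
      rwa [max_self] at this
    apply tendsto_of_tendsto_of_tendsto_of_le_of_le' Tmin Tmax
    · -- lower bound: min (A s) (B s) ≤ slope
      filter_upwards [self_mem_nhdsWithin] with s hs
      have hsne : s ≠ t := hs
      rw [slope_def_field]
      rcases lt_or_gt_of_ne hsne with hlt | hgt
      · refine le_trans (min_le_right _ _) ?_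
        have i2 : ustar s y - ustar t y ≤ -(u s (g s y) - u t (g s y)) := by
          have h1 : g s y * y - u t (g s y) ≤ ustar t y := by
            rw [hstar_eq t y]; exact hle t y (g s y)
          have h2 : ustar s y = g s y * y - u s (g s y) := hstar_eq s y
          linarith
        show -((u s (g s y) - u t (g s y)) / (s - t)) ≤ (ustar s y - ustar t y) / (s - t)
        rw [← neg_div]
        exact div_le_div_of_nonpos_of_le (by linarith) i2
      · refine le_trans (min_le_left _ _) ?_
        have i1 : -(u s x₀ - u t x₀) ≤ ustar s y - ustar t y := by
          have h1 : x₀ * y - u s x₀ ≤ ustar s y := by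
            rw [hstar_eq s y]; exact hle s y x₀
          have h2 : ustar t y = x₀ * y - u t x₀ := by rw [hstar_eq t y]
          linarith
        show -((u s x₀ - u t x₀) / (s - t)) ≤ (ustar s y - ustar t y) / (s - t)
        rw [← neg_div]
        exact (div_le_div_iff_of_pos_right (by linarith)).mpr i1
    · -- upper bound: slope ≤ max (A s) (B s)
      filter_upwards [self_mem_nhdsWithin] with s hs
      have hsne : s ≠ t := hs
      rw [slope_def_field]
      rcases lt_or_gt_of_ne hsne with hlt | hgt
      · refine le_trans ?_ (le_max_left _ _)
        have i1 : -(u s x₀ - u t x₀) ≤ ustar s y - ustar t y := by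
          have h1 : x₀ * y - u s x₀ ≤ ustar s y := by
            rw [hstar_eq s y]; exact hle s y x₀
          have h2 : ustar t y = x₀ * y - u t x₀ := by rw [hstar_eq t y]
          linarith
        show (ustar s y - ustar t y) / (s - t) ≤ -((u s x₀ - u t x₀) / (s - t))
        rw [← neg_div]
        exact div_le_div_of_nonpos_of_le (by linarith) i1
      · refine le_trans ?_ (le_max_right _ _)
        have i2 : ustar s y - ustar t y ≤ -(u s (g s y) - u t (g s y)) := by
          have h1 : g s y * y - u t (g s y) ≤ ustar t y := by
            rw [hstar_eq t y]; exact hle t y (g s y)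
          have h2 : ustar s y = g s y * y - u s (g s y) := hstar_eq s y
          linarith
        show (ustar s y - ustar t y) / (s - t) ≤ -((u s (g s y) - u t (g s y)) / (s - t))
        rw [← neg_div]
        exact (div_le_div_iff_of_pos_right (by linarith)).mpr i2
  -- conclusion
  intro t y
  have hp := hPDE t (g t y)
  rw [hg1 t y] at hp
  rw [(hstar_dt t y).deriv, (hstar_d1 t y).deriv, hstar_d2 t y]
  rw [abs_sub_comm y (g t y)] at hp
  simp only [one_div] at hp
  linarith [hp]
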